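/- Let k ≥ 1 and n ≥ 1 be integers, and let C₀, C₁, ..., C_k be real numbers with N = Σ_{i=0}^k C_i ≠ 0, (n-1)/N < 1, and C_i/N > 0 for i = 0, 1, ..., k. Fix a tuple (x₀, x₁, ..., x_k) of nonnegative integers with Σ_{i=0}^k x_i = n. Then, as the positive integer a tends to infinity, (n! / (x₀!·x₁!⋯x_k!)) · (∏_{i=0}^k ∏_{ℓ=1}^{x_i} (a_i(a) + (ℓ−1)·c(a))) / (∏_{ℓ=1}^n (a + (ℓ−1)·c(a))) converges to (∏_{i=0}^k C(C_i, x_i)) / C(N, n). -/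

import Mathlib

open Filter

lemma tendsto_floor_mul_div (r : ℝ) :
    Tendsto (fun a : ℕ => (⌊(a : ℝ) * r⌋ : ℝ) / a) atTop (nhds r) := by
  have h1 : Tendsto (fun a : ℕ => r - 1 / (a : ℝ)) atTop (nhds r) := by
    simpa using tendsto_const_nhds.sub (tendsto_one_div_atTop_nhds_zero_nat : Tendsto (fun a : ℕ => 1 / (a : ℝ)) atTop (nhds 0))
  apply tendsto_of_tendsto_of_tendsto_of_le_of_le' h1 tendsto_const_nhds
  · filter_upwards [eventually_ge_atTop 1] with a ha
    have hap : (0 : ℝ) < a := by exact_mod_cast Nat.lt_of_lt_of_le Nat.zero_lt_one ha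
    rw [le_div_iff₀ hap]
    have h2 := Int.sub_one_lt_floor ((a : ℝ) * r)
    have h3 : (1 / (a:ℝ)) * a = 1 := by field_simp
    nlinarith [h2, h3]
  · filter_upwards [eventually_ge_atTop 1] with a ha
    have hap : (0 : ℝ) < a := by exact_mod_cast Nat.lt_of_lt_of_le Nat.zero_lt_one ha
    rw [div_le_iff₀ hap]
    have := Int.floor_le ((a : ℝ) * r)
    nlinarith [this]

lemma tendsto_ceil_mul_div (r : ℝ) :
    Tendsto (fun a : ℕ => (⌈(a : ℝ) * r⌉ : ℝ) / a) atTop (nhds r) := by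
  have h1 : Tendsto (fun a : ℕ => r + 1 / (a : ℝ)) atTop (nhds r) := by
    simpa using tendsto_const_nhds.add (tendsto_one_div_atTop_nhds_zero_nat : Tendsto (fun a : ℕ => 1 / (a : ℝ)) atTop (nhds 0))
  apply tendsto_of_tendsto_of_tendsto_of_le_of_le' tendsto_const_nhds h1
  · filter_upwards [eventually_ge_atTop 1] with a ha
    have hap : (0 : ℝ) < a := by exact_mod_cast Nat.lt_of_lt_of_le Nat.zero_lt_one ha
    rw [le_div_iff₀ hap]
    have := Int.le_ceil ((a : ℝ) * r)
    nlinarith [this]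
  · filter_upwards [eventually_ge_atTop 1] with a ha
    have hap : (0 : ℝ) < a := by exact_mod_cast Nat.lt_of_lt_of_le Nat.zero_lt_one ha
    rw [div_le_iff₀ hap]
    have h2 := Int.ceil_lt_add_one ((a : ℝ) * r)
    have h3 : (1 / (a:ℝ)) * a = 1 := by field_simp
    nlinarith [h2, h3]


/-- The generalized binomial coefficient C(t, m) = (∏_{ℓ=1}^m (t - ℓ + 1)) / m!,
with C(t, 0) = 1, for a real number t and a nonnegative integer m. -/
noncomputable def genChoose (t : ℝ) (m : ℕ) : ℝ :=
  (∏ ℓ ∈ Finset.range m, (t - ℓ)) / (m.factorial : ℝ)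

/-- As the positive integer a tends to infinity, the Pólya-Eggenberger
probability (with parameters c(a) = -⌈a/N⌉, a_i(a) = ⌊a·C_i/N⌋ for i = 1, ..., k and
a₀(a) = a - Σ_{i=1}^k a_i(a)) converges to the multivariate generalized hypergeometric
probability (∏_{i=0}^k C(C_i, x_i)) / C(N, n). -/
theorem polya_tendsto_genHyper (k n : ℕ) (hk : 1 ≤ k) (hn : 1 ≤ n)
    (C : Fin (k + 1) → ℝ) (N : ℝ) (hN : N = ∑ i, C i) (hN0 : N ≠ 0)
    (hn1 : ((n : ℝ) - 1) / N < 1) (hC : ∀ i, C i / N > 0)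
    (x : Fin (k + 1) → ℕ) (hx : (∑ i, x i) = n) :
    Tendsto (fun a : ℕ =>
        ((n.factorial : ℝ) / ∏ i, ((x i).factorial : ℝ)) *
        (∏ i, ∏ ℓ ∈ Finset.range (x i),
          (((if i = 0 then
                (a : ℤ) - ∑ j ∈ Finset.univ.erase (0 : Fin (k + 1)), ⌊(a : ℝ) * C j / N⌋
              else ⌊(a : ℝ) * C i / N⌋) : ℝ)
            + (ℓ : ℝ) * ((-⌈(a : ℝ) / N⌉ : ℤ) : ℝ))) /
        (∏ ℓ ∈ Finset.range n, ((a : ℝ) + (ℓ : ℝ) * ((-⌈(a : ℝ) / N⌉ : ℤ) : ℝ))))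
      atTop
      (nhds ((∏ i, genChoose (C i) (x i)) / genChoose N n)) := by
  -- notation
  set K : ℝ := (n.factorial : ℝ) / ∏ i, ((x i).factorial : ℝ) with hK
  set c : ℕ → ℝ := fun a => ((-⌈(a : ℝ) / N⌉ : ℤ) : ℝ) with hcdef
  set Y : Fin (k + 1) → ℕ → ℝ := fun i a =>
    ((if i = 0 then
        (a : ℤ) - ∑ j ∈ Finset.univ.erase (0 : Fin (k + 1)), ⌊(a : ℝ) * C j / N⌋
      else ⌊(a : ℝ) * C i / N⌋) : ℝ) with hYdef
  -- nonvanishing of N - ℓ for ℓ < n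
  have hQ : ∀ ℓ ∈ Finset.range n, N - (ℓ : ℝ) ≠ 0 := by
    intro ℓ hℓ
    rcases lt_or_gt_of_ne hN0 with hNlt | hNgt
    · have : (ℓ : ℝ) ≥ 0 := Nat.cast_nonneg ℓ
      linarith
    · have hℓn : (ℓ : ℝ) ≤ (n : ℝ) - 1 := by
        have := Finset.mem_range.mp hℓ
        have : (ℓ : ℝ) + 1 ≤ (n : ℝ) := by exact_mod_cast Nat.succ_le_of_lt this
        linarith
      have : (n : ℝ) - 1 < N := by
        have := (div_lt_one hNgt).mp hn1
        linarith
      linarith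
  -- limit of c a / a
  have hc : Tendsto (fun a : ℕ => c a / a) atTop (nhds (-N⁻¹)) := by
    have := (tendsto_ceil_mul_div N⁻¹).neg
    simp only [hcdef]
    convert this using 2 with a
    push_cast
    simp [neg_div, div_eq_mul_inv]
  -- limit of Y i a / a
  have hfl : ∀ i : Fin (k + 1),
      Tendsto (fun a : ℕ => (⌊(a : ℝ) * C i / N⌋ : ℝ) / a) atTop (nhds (C i / N)) := by
    intro i
    have := tendsto_floor_mul_div (C i / N)
    convert this using 4 with a
    rw [mul_div_assoc]
  have hy : ∀ i : Fin (k + 1),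
      Tendsto (fun a : ℕ => Y i a / a) atTop (nhds (C i / N)) := by
    intro i
    by_cases hi : i = 0
    · subst hi
      simp only [hYdef, if_pos rfl]
      have hone : Tendsto (fun a : ℕ => (a : ℝ) / a) atTop (nhds 1) := by
        apply Tendsto.congr' _ tendsto_const_nhds
        filter_upwards [eventually_ge_atTop 1] with a ha
        have : (a : ℝ) ≠ 0 := by positivity
        rw [div_self this]
      have hsum : Tendsto
          (fun a : ℕ => ∑ j ∈ Finset.univ.erase (0 : Fin (k + 1)),
            (⌊(a : ℝ) * C j / N⌋ : ℝ) / a) atTop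
          (nhds (∑ j ∈ Finset.univ.erase (0 : Fin (k + 1)), C j / N)) :=
        tendsto_finset_sum _ (fun j _ => hfl j)
      have hlim := hone.sub hsum
      have hval : 1 - ∑ j ∈ Finset.univ.erase (0 : Fin (k + 1)), C j / N = C 0 / N := by
        have h1 : (∑ j, C j / N) = 1 := by
          rw [← Finset.sum_div, ← hN, div_self hN0]
        rw [← Finset.add_sum_erase _ _ (Finset.mem_univ (0 : Fin (k + 1)))] at h1
        linarith
      rw [hval] at hlim
      apply hlim.congr
      intro a
      push_cast
      rw [sub_div, Finset.sum_div]
    · simp only [hYdef, if_neg hi]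
      exact hfl i
  -- the rescaled form
  have key : ∀ᶠ a : ℕ in atTop,
      K * (∏ i, ∏ ℓ ∈ Finset.range (x i), (Y i a + (ℓ : ℝ) * c a)) /
        (∏ ℓ ∈ Finset.range n, ((a : ℝ) + (ℓ : ℝ) * c a))
      = K * (∏ i, ∏ ℓ ∈ Finset.range (x i), (Y i a / a + (ℓ : ℝ) * (c a / a))) /
        (∏ ℓ ∈ Finset.range n, (1 + (ℓ : ℝ) * (c a / a))) := by
    filter_upwards [eventually_ge_atTop 1] with a ha
    have ha0 : (a : ℝ) ≠ 0 := by positivity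
    have hnum : (∏ i, ∏ ℓ ∈ Finset.range (x i), (Y i a + (ℓ : ℝ) * c a))
        = (a : ℝ) ^ n * ∏ i, ∏ ℓ ∈ Finset.range (x i), (Y i a / a + (ℓ : ℝ) * (c a / a)) := by
      have h1 : ∀ i : Fin (k + 1), (∏ ℓ ∈ Finset.range (x i), (Y i a + (ℓ : ℝ) * c a))
          = (a : ℝ) ^ (x i) * ∏ ℓ ∈ Finset.range (x i), (Y i a / a + (ℓ : ℝ) * (c a / a)) := by
        intro i
        have hpc : (a : ℝ) ^ (x i) = ∏ _ℓ ∈ Finset.range (x i), (a : ℝ) := by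
          rw [Finset.prod_const, Finset.card_range]
        rw [hpc, ← Finset.prod_mul_distrib]
        apply Finset.prod_congr rfl
        intro ℓ _
        field_simp
      calc (∏ i, ∏ ℓ ∈ Finset.range (x i), (Y i a + (ℓ : ℝ) * c a))
          = ∏ i, ((a : ℝ) ^ (x i) * ∏ ℓ ∈ Finset.range (x i), (Y i a / a + (ℓ : ℝ) * (c a / a))) :=
            Finset.prod_congr rfl (fun i _ => h1 i)
        _ = (∏ i, (a : ℝ) ^ (x i)) * ∏ i, ∏ ℓ ∈ Finset.range (x i), (Y i a / a + (ℓ : ℝ) * (c a / a)) :=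
            Finset.prod_mul_distrib
        _ = (a : ℝ) ^ n * ∏ i, ∏ ℓ ∈ Finset.range (x i), (Y i a / a + (ℓ : ℝ) * (c a / a)) := by
            rw [Finset.prod_pow_eq_pow_sum, hx]
    have hden : (∏ ℓ ∈ Finset.range n, ((a : ℝ) + (ℓ : ℝ) * c a))
        = (a : ℝ) ^ n * ∏ ℓ ∈ Finset.range n, (1 + (ℓ : ℝ) * (c a / a)) := by
      have hpc : (a : ℝ) ^ n = ∏ _ℓ ∈ Finset.range n, (a : ℝ) := by
        rw [Finset.prod_const, Finset.card_range]
      rw [hpc, ← Finset.prod_mul_distrib]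
      apply Finset.prod_congr rfl
      intro ℓ _
      field_simp
    rw [mul_div_assoc, mul_div_assoc, hnum, hden, mul_div_mul_left _ _ (pow_ne_zero n ha0)]
  -- limit of the rescaled form
  have hQne : (∏ ℓ ∈ Finset.range n, (1 + (ℓ : ℝ) * (-N⁻¹))) ≠ 0 := by
    rw [Finset.prod_ne_zero_iff]
    intro ℓ hℓ
    have h1 : 1 + (ℓ : ℝ) * (-N⁻¹) = (N - ℓ) * N⁻¹ := by
      field_simp
      ring
    rw [h1]
    exact mul_ne_zero (hQ ℓ hℓ) (inv_ne_zero hN0)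
  have hP : Tendsto (fun a : ℕ => ∏ i, ∏ ℓ ∈ Finset.range (x i),
      (Y i a / a + (ℓ : ℝ) * (c a / a))) atTop
      (nhds (∏ i, ∏ ℓ ∈ Finset.range (x i), (C i / N + (ℓ : ℝ) * (-N⁻¹)))) := by
    apply tendsto_finset_prod
    intro i _
    apply tendsto_finset_prod
    intro ℓ _
    exact (hy i).add (tendsto_const_nhds.mul hc)
  have hQt : Tendsto (fun a : ℕ => ∏ ℓ ∈ Finset.range n, (1 + (ℓ : ℝ) * (c a / a))) atTop
      (nhds (∏ ℓ ∈ Finset.range n, (1 + (ℓ : ℝ) * (-N⁻¹)))) := by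
    apply tendsto_finset_prod
    intro ℓ _
    exact tendsto_const_nhds.add (tendsto_const_nhds.mul hc)
  have hG : Tendsto (fun a : ℕ =>
      K * (∏ i, ∏ ℓ ∈ Finset.range (x i), (Y i a / a + (ℓ : ℝ) * (c a / a))) /
        (∏ ℓ ∈ Finset.range n, (1 + (ℓ : ℝ) * (c a / a)))) atTop
      (nhds (K * (∏ i, ∏ ℓ ∈ Finset.range (x i), (C i / N + (ℓ : ℝ) * (-N⁻¹))) /
        (∏ ℓ ∈ Finset.range n, (1 + (ℓ : ℝ) * (-N⁻¹))))) :=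
    (tendsto_const_nhds.mul hP).div hQt hQne
  -- identify the limit value
  have hval : K * (∏ i, ∏ ℓ ∈ Finset.range (x i), (C i / N + (ℓ : ℝ) * (-N⁻¹))) /
      (∏ ℓ ∈ Finset.range n, (1 + (ℓ : ℝ) * (-N⁻¹)))
      = (∏ i, genChoose (C i) (x i)) / genChoose N n := by
    have hnum : (∏ i, ∏ ℓ ∈ Finset.range (x i), (C i / N + (ℓ : ℝ) * (-N⁻¹)))
        = (∏ i, ∏ ℓ ∈ Finset.range (x i), (C i - ℓ)) * (N⁻¹) ^ n := by
      have h1 : ∀ i : Fin (k + 1), (∏ ℓ ∈ Finset.range (x i), (C i / N + (ℓ : ℝ) * (-N⁻¹)))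
          = (∏ ℓ ∈ Finset.range (x i), (C i - ℓ)) * (N⁻¹) ^ (x i) := by
        intro i
        have hpc : (N⁻¹ : ℝ) ^ (x i) = ∏ _ℓ ∈ Finset.range (x i), (N⁻¹ : ℝ) := by
          rw [Finset.prod_const, Finset.card_range]
        rw [hpc, ← Finset.prod_mul_distrib]
        apply Finset.prod_congr rfl
        intro ℓ _
        field_simp
        ring
      calc (∏ i, ∏ ℓ ∈ Finset.range (x i), (C i / N + (ℓ : ℝ) * (-N⁻¹)))
          = ∏ i, ((∏ ℓ ∈ Finset.range (x i), (C i - ℓ)) * (N⁻¹) ^ (x i)) :=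
            Finset.prod_congr rfl (fun i _ => h1 i)
        _ = (∏ i, ∏ ℓ ∈ Finset.range (x i), (C i - ℓ)) * ∏ i, (N⁻¹) ^ (x i) :=
            Finset.prod_mul_distrib
        _ = (∏ i, ∏ ℓ ∈ Finset.range (x i), (C i - ℓ)) * (N⁻¹) ^ n := by
            rw [Finset.prod_pow_eq_pow_sum, hx]
    have hden : (∏ ℓ ∈ Finset.range n, (1 + (ℓ : ℝ) * (-N⁻¹)))
        = (∏ ℓ ∈ Finset.range n, (N - ℓ)) * (N⁻¹) ^ n := by
      have hpc : (N⁻¹ : ℝ) ^ n = ∏ _ℓ ∈ Finset.range n, (N⁻¹ : ℝ) := by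
        rw [Finset.prod_const, Finset.card_range]
      rw [hpc, ← Finset.prod_mul_distrib]
      apply Finset.prod_congr rfl
      intro ℓ _
      field_simp
      ring
    rw [hnum, hden, mul_div_assoc, mul_div_mul_right _ _ (pow_ne_zero n (inv_ne_zero hN0))]
    have hgprod : (∏ i, genChoose (C i) (x i))
        = (∏ i, ∏ ℓ ∈ Finset.range (x i), (C i - ℓ)) / ∏ i, ((x i).factorial : ℝ) := by
      rw [← Finset.prod_div_distrib]
      rfl
    rw [hgprod]
    unfold genChoose
    have hQ0 : (∏ ℓ ∈ Finset.range n, (N - (ℓ : ℝ))) ≠ 0 :=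
      Finset.prod_ne_zero_iff.mpr hQ
    have hfx : (∏ i, ((x i).factorial : ℝ)) ≠ 0 := by
      rw [Finset.prod_ne_zero_iff]
      intro i _
      exact_mod_cast (x i).factorial_ne_zero
    have hfn : ((n.factorial : ℝ)) ≠ 0 := by exact_mod_cast n.factorial_ne_zero
    rw [hK]
    field_simp
  rw [← hval]
  refine Tendsto.congr' ?_ hG
  filter_upwards [key] with a h
  exact h.symm
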